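/- Assume: (i) for all i, i' ∈ ℤ and every R ∈ ℕ, every finite family of finite subsets Z ⊆ ℤ with i ∈ Z, i' ∈ Z and Z ⊆ [−R, R] satisfies Σ a(Z) ≤ ḡ(R) · J̄(|i − i'|); (ii) there are reals η₁, η₂ ≥ 1 such that for p ∈ {1, 2} and all R₀ ∈ ℕ, y₀ ≥ 1 and N ≥ y₀, Σ_{y = y₀}^{N} ḡ(R₀ + y) (y^{p−1} + 1) J̄(y) ≤ η_p · ḡ(R₀ + y₀) (y₀^p + 1) J̄(y₀). Then for all x, y ∈ ℤ with r := y − x ≥ 1, every finite family of finite subsets Z ⊆ ℤ with Z ∩ (−∞, x] ≠ ∅ and Z ∩ [y, ∞) ≠ ∅ satisfies Σ a(Z) ≤ 2 η₁ η₂ · ḡ(|x| + r) · (r² + 1) · J̄(r). -/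

import Mathlib

/-- Block–block interaction bound (Lemma 17 of the paper): for interaction norms
`a(Z) ≥ 0` on finite subsets of ℤ, a nonnegative monotone local-energy scale `ḡ`,
and a nonnegative decay profile `J̄`, assume
(i) every finite family of sets `Z` containing both `i` and `i'` and contained in
`[-R, R]` has total weight at most `ḡ(R) J̄(|i - i'|)`; and
(ii) `η₁, η₂ ≥ 1` are tail constants for `∑_y ḡ(R₀+y)(y^{p-1}+1)J̄(y)`, `p = 1, 2`.
Then for `x, y ∈ ℤ` with `r = y - x ≥ 1`, every finite family of sets meeting both
`(-∞, x]` and `[y, ∞)` has total weight at most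
`2 η₁ η₂ ḡ(|x| + r)(r² + 1) J̄(r)`. -/
theorem stmt_13 (a : Finset ℤ → ℝ) (ha : ∀ Z, 0 ≤ a Z)
    (g J : ℕ → ℝ) (hg0 : ∀ r, 0 ≤ g r) (hgmono : Monotone g) (hJ : ∀ r, 0 ≤ J r)
    (hbound : ∀ (i i' : ℤ) (R : ℕ) (F : Finset (Finset ℤ)),
      (∀ Z ∈ F, i ∈ Z ∧ i' ∈ Z ∧ Z ⊆ Finset.Icc (-(R : ℤ)) (R : ℤ)) →
      ∑ Z ∈ F, a Z ≤ g R * J (i - i').natAbs)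
    (η₁ η₂ : ℝ) (hη₁ : 1 ≤ η₁) (hη₂ : 1 ≤ η₂)
    (hsum1 : ∀ (R₀ y₀ N : ℕ), 1 ≤ y₀ → y₀ ≤ N →
      ∑ y ∈ Finset.Icc y₀ N, g (R₀ + y) * ((y : ℝ) ^ 0 + 1) * J y ≤
        η₁ * (g (R₀ + y₀) * ((y₀ : ℝ) ^ 1 + 1) * J y₀))
    (hsum2 : ∀ (R₀ y₀ N : ℕ), 1 ≤ y₀ → y₀ ≤ N →
      ∑ y ∈ Finset.Icc y₀ N, g (R₀ + y) * ((y : ℝ) ^ 1 + 1) * J y ≤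
        η₂ * (g (R₀ + y₀) * ((y₀ : ℝ) ^ 2 + 1) * J y₀)) :
    ∀ (x y : ℤ), 1 ≤ y - x →
      ∀ F : Finset (Finset ℤ),
        (∀ Z ∈ F, (∃ i ∈ Z, i ≤ x) ∧ (∃ j ∈ Z, y ≤ j)) →
        ∑ Z ∈ F, a Z ≤
          2 * η₁ * η₂ * g (x.natAbs + (y - x).toNat) *
            (((y - x : ℤ) : ℝ) ^ 2 + 1) * J (y - x).toNat := by
  classical
  intro x y hr F hF
  set r : ℕ := (y - x).toNat with hrdef
  have hrZ : (r : ℤ) = y - x := Int.toNat_of_nonneg (by omega)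
  have hr1 : 1 ≤ r := by omega
  -- the fibering map: offsets of min and max
  set φ : Finset ℤ → ℕ × ℕ := fun Z =>
    if h : Z.Nonempty then ((x - Z.min' h).toNat, (Z.max' h - y).toNat) else (0, 0)
    with hφdef
  set T : Finset (ℕ × ℕ) := F.image φ with hT
  set M : ℕ := T.sup (fun p => p.1 + p.2) with hM
  set G : ℕ → ℝ := fun u => g (x.natAbs + r + u) * J (r + u) with hG
  have hGnn : ∀ u, 0 ≤ G u := fun u => mul_nonneg (hg0 _) (hJ _)
  -- Step 1: fiberwise decomposition
  have h1 : ∑ Z ∈ F, a Z = ∑ p ∈ T, ∑ Z ∈ F.filter (fun Z => φ Z = p), a Z :=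
    (Finset.sum_fiberwise_of_maps_to (fun Z hZ => Finset.mem_image_of_mem φ hZ) a).symm
  -- Step 2: each fiber is bounded by G (s + t)
  have h2 : ∀ p ∈ T, ∑ Z ∈ F.filter (fun Z => φ Z = p), a Z ≤ G (p.1 + p.2) := by
    intro p hp
    have key := hbound (x - p.1) (y + p.2) (x.natAbs + r + (p.1 + p.2))
      (F.filter (fun Z => φ Z = p)) ?_
    · have e1 : ((x - (p.1 : ℤ)) - (y + (p.2 : ℤ))).natAbs = r + (p.1 + p.2) := by
        omega
      rw [e1] at key
      exact key
    · intro Z hZ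
      rw [Finset.mem_filter] at hZ
      obtain ⟨hZF, hφZ⟩ := hZ
      obtain ⟨⟨i, hiZ, hix⟩, ⟨j, hjZ, hyj⟩⟩ := hF Z hZF
      have hne : Z.Nonempty := ⟨i, hiZ⟩
      have hφZ' : ((x - Z.min' hne).toNat, (Z.max' hne - y).toNat) = p := by
        rw [hφdef] at hφZ
        simpa [dif_pos hne] using hφZ
      have hmin_le : Z.min' hne ≤ x := le_trans (Z.min'_le i hiZ) hix
      have hmax_ge : y ≤ Z.max' hne := le_trans hyj (Z.le_max' j hjZ)
      have hp1 : (p.1 : ℤ) = x - Z.min' hne := by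
        have := congrArg Prod.fst hφZ'
        simp only at this
        omega
      have hp2 : (p.2 : ℤ) = Z.max' hne - y := by
        have := congrArg Prod.snd hφZ'
        simp only at this
        omega
      have hminZ : Z.min' hne = x - (p.1 : ℤ) := by omega
      have hmaxZ : Z.max' hne = y + (p.2 : ℤ) := by omega
      refine ⟨hminZ ▸ Z.min'_mem hne, hmaxZ ▸ Z.max'_mem hne, ?_⟩
      intro z hz
      have hlb := Z.min'_le z hz
      have hub := Z.le_max' z hz
      rw [Finset.mem_Icc]
      constructor <;> omega
  -- Step 3: bound the sum of fibers
  have h3 : ∑ p ∈ T, G (p.1 + p.2) ≤ ∑ u ∈ Finset.range (M + 1), ((u : ℝ) + 1) * G u := by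
    -- reindex by e p = (p.1 + p.2, p.1), injective
    set e : ℕ × ℕ → ℕ × ℕ := fun p => (p.1 + p.2, p.1) with he
    have hinj : ∀ p ∈ T, ∀ q ∈ T, e p = e q → p = q := by
      intro p _ q _ hpq
      rw [he] at hpq
      simp only [Prod.mk.injEq] at hpq
      exact Prod.ext hpq.2 (by omega)
    have himg : ∑ q ∈ T.image e, G q.1 = ∑ p ∈ T, G (p.1 + p.2) :=
      Finset.sum_image hinj
    rw [← himg]
    set Q : Finset (ℕ × ℕ) := T.image e with hQ
    have hmaps : ∀ q ∈ Q, q.1 ∈ Finset.range (M + 1) := by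
      intro q hq
      rw [hQ, Finset.mem_image] at hq
      obtain ⟨p, hp, rfl⟩ := hq
      have : p.1 + p.2 ≤ M := Finset.le_sup (f := fun p => p.1 + p.2) hp
      simpa [he, Finset.mem_range] using Nat.lt_succ_of_le this
    rw [← Finset.sum_fiberwise_of_maps_to hmaps (fun q => G q.1)]
    apply Finset.sum_le_sum
    intro u _
    have hconst : ∑ q ∈ Q.filter (fun q => q.1 = u), G q.1
        = (Q.filter (fun q => q.1 = u)).card • G u := by
      rw [← Finset.sum_const]
      apply Finset.sum_congr rfl
      intro q hq
      rw [Finset.mem_filter] at hq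
      rw [hq.2]
    rw [hconst]
    have hcard : (Q.filter (fun q => q.1 = u)).card ≤ u + 1 := by
      have : (Q.filter (fun q => q.1 = u)).card ≤ (Finset.range (u + 1)).card := by
        apply Finset.card_le_card_of_injOn (fun q => q.2)
        · intro q hq
          rw [Finset.mem_coe, Finset.mem_filter, hQ, Finset.mem_image] at hq
          obtain ⟨⟨p, hp, rfl⟩, hq1⟩ := hq
          simp only [he] at hq1 ⊢
          rw [Finset.mem_coe, Finset.mem_range]
          omega
        · intro q hq q' hq' hqq'
          rw [Finset.mem_coe, Finset.mem_filter] at hq hq'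
          exact Prod.ext (hq.2.trans hq'.2.symm) hqq'
      simpa using this
    rw [nsmul_eq_mul]
    apply mul_le_mul_of_nonneg_right _ (hGnn u)
    exact_mod_cast hcard
  -- Step 4: apply hsum2
  have h4 : ∑ u ∈ Finset.range (M + 1), ((u : ℝ) + 1) * G u ≤
      η₂ * (g (x.natAbs + r) * ((r : ℝ) ^ 2 + 1) * J r) := by
    have step : ∑ u ∈ Finset.range (M + 1), ((u : ℝ) + 1) * G u ≤
        ∑ u ∈ Finset.range (M + 1),
          g (x.natAbs + (r + u)) * (((r + u : ℕ) : ℝ) ^ 1 + 1) * J (r + u) := by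
      apply Finset.sum_le_sum
      intro u _
      have hGx : G u = g (x.natAbs + (r + u)) * J (r + u) := by
        show g (x.natAbs + r + u) * J (r + u) = _
        rw [add_assoc]
      rw [hGx, pow_one]
      push_cast
      have key : (0:ℝ) ≤ (r : ℝ) * (g (x.natAbs + (r + u)) * J (r + u)) := by
        have := hg0 (x.natAbs + (r + u)); have := hJ (r + u); positivity
      have expand : g (x.natAbs + (r + u)) * ((r : ℝ) + (u : ℝ) + 1) * J (r + u)
          - ((u : ℝ) + 1) * (g (x.natAbs + (r + u)) * J (r + u))
          = (r : ℝ) * (g (x.natAbs + (r + u)) * J (r + u)) := by ring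
      nlinarith [key, expand]
    refine le_trans step ?_
    have hIcc : ∑ w ∈ Finset.Icc r (r + M), g (x.natAbs + w) * ((w : ℝ) ^ 1 + 1) * J w
        = ∑ u ∈ Finset.range (M + 1),
            g (x.natAbs + (r + u)) * (((r + u : ℕ) : ℝ) ^ 1 + 1) * J (r + u) := by
      rw [← Finset.Ico_add_one_right_eq_Icc, Finset.sum_Ico_eq_sum_range]
      have hcount : r + M + 1 - r = M + 1 := by omega
      rw [hcount]
    rw [← hIcc]
    exact hsum2 x.natAbs r (r + M) hr1 (Nat.le_add_right _ _)
  -- combine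
  have hX : (0:ℝ) ≤ g (x.natAbs + r) * ((r : ℝ) ^ 2 + 1) * J r := by
    have := hg0 (x.natAbs + r); have := hJ r; positivity
  have main : ∑ Z ∈ F, a Z ≤ η₂ * (g (x.natAbs + r) * ((r : ℝ) ^ 2 + 1) * J r) := by
    rw [h1]
    exact le_trans (Finset.sum_le_sum h2) (le_trans h3 h4)
  have hgoalcast : ((y - x : ℤ) : ℝ) = (r : ℝ) := by rw [← hrZ]; norm_cast
  rw [hgoalcast]
  refine le_trans main ?_
  nlinarith [hX, mul_nonneg hX (by linarith : (0:ℝ) ≤ η₂)]
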